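/- (Simulation bound for clipped optimistic values; Lemma lsvi-simulation of the paper.) Let S be a finite state space, 𝒜 a finite action set, H ∈ ℕ, and d₀ an initial distribution on S. Let P* be a transition model, r = (r_h) a reward with r_h : S×𝒜 → ℝ, M_V ∈ ℝ, β ≥ 0, b_h : S×𝒜 → [0,∞) arbitrary nonnegative functions, and P̂_h : S×𝒜×S → ℝ arbitrary real-valued functions. Define V̂_H ≡ 0, Q̂_h(s,a) := r_h(s,a) + Σ_{s'} P̂_h(s'|s,a) V̂_{h+1}(s') + β·b_h(s,a), a deterministic greedy policy π̂ with Q̂_h(s, π̂_h(s)) = max_a Q̂_h(s,a), and V̂_h(s) := min{ max_a Q̂_h(s,a), M_V }. Let V^{π̂}_{P*,r;h} denote the value functions of π̂ under P* and r (V^{π̂}_{P*,r;H} ≡ 0, V^{π̂}_{P*,r;h}(s) = r_h(s,π̂_h(s)) + Σ_{s'} P*_h(s'|s,π̂_h(s)) V^{π̂}_{P*,r;h+1}(s')). Then Σ_s d₀(s)·(V̂_0(s) − V^{π̂}_{P*,r;0}(s)) ≤ Σ_{h=0}^{H−1} E_{π̂,P*}[ β·b_h(s_h,a_h) + Σ_{s'}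 (P̂_h(s'|s_h,a_h) − P*_h(s'|s_h,a_h)) · V̂_{h+1}(s') ], where E_{π̂,P*} is the expectation over the trajectory generated by executing π̂ in P* from d₀ (so a_h = π̂_h(s_h)). -/

import Mathlib

/-! Simulation bound for clipped optimistic values. -/

noncomputable section

open Finset

/-- `p` is a probability distribution on the finite type `X`. -/
def IsDist {X : Type*} [Fintype X] (p : X → ℝ) : Prop :=
  (∀ x, 0 ≤ p x) ∧ (∑ x, p x) = 1

variable {S Act : Type*} [Fintype S] [Fintype Act]

/-- State marginal `Pr(s_h = s)` when the deterministic policy `π` is executed in the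
transition model `P` starting from `d0` (so that the state-action occupancy at step
`h` is supported on pairs `(s, π_h(s))`). -/
def soc (d0 : S → ℝ) (P : ℕ → S → Act → S → ℝ) (π : ℕ → S → Act) : ℕ → S → ℝ
  | 0 => d0
  | h + 1 => fun s' => ∑ s, soc d0 P π h s * P h s (π h s) s'

/-- **Simulation bound for clipped optimistic values.**
With `V̂, Q̂` the clipped optimistic backups built from an arbitrary (not necessarily
stochastic) model `P̂` and bonuses `b`, `π̂` greedy w.r.t. `Q̂`, and `V^{π̂}` the true
value of `π̂` under `P*` and `r`:
`Σ_s d₀(s)(V̂_0(s) − V^{π̂}_0(s)) ≤ Σ_{h<H} E_{π̂,P*}[β b_h(s_h,a_h)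
  + Σ_{s'}(P̂_h(s'|s_h,a_h) − P*_h(s'|s_h,a_h)) V̂_{h+1}(s')]`. -/
theorem simulation_bound_clipped [Nonempty Act]
    (H : ℕ)
    (d0 : S → ℝ) (hd0 : IsDist d0)
    (Pstar : ℕ → S → Act → S → ℝ) (hPstar : ∀ h s a, IsDist (Pstar h s a))
    (r : ℕ → S → Act → ℝ) (M : ℝ) (β : ℝ) (hβ : 0 ≤ β)
    (b : ℕ → S → Act → ℝ) (hb : ∀ h s a, 0 ≤ b h s a)
    (Phat : ℕ → S → Act → S → ℝ)
    (Qhat : ℕ → S → Act → ℝ) (Vhat : ℕ → S → ℝ)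
    (hVhatH : ∀ s, Vhat H s = 0)
    (hQhat : ∀ h, h < H → ∀ s a,
      Qhat h s a = r h s a + (∑ s', Phat h s a s' * Vhat (h + 1) s') + β * b h s a)
    (πhat : ℕ → S → Act)
    (hπhat : ∀ h, h < H → ∀ s,
      Qhat h s (πhat h s) = Finset.univ.sup' Finset.univ_nonempty (fun a => Qhat h s a))
    (hVhat : ∀ h, h < H → ∀ s,
      Vhat h s = min (Finset.univ.sup' Finset.univ_nonempty (fun a => Qhat h s a)) M)
    (Vpi : ℕ → S → ℝ)
    (hVpiH : ∀ s, Vpi H s = 0)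
    (hVpi : ∀ h, h < H → ∀ s,
      Vpi h s = r h s (πhat h s) + ∑ s', Pstar h s (πhat h s) s' * Vpi (h + 1) s') :
    ∑ s, d0 s * (Vhat 0 s - Vpi 0 s)
      ≤ ∑ h ∈ Finset.range H, ∑ s, soc d0 Pstar πhat h s *
          (β * b h s (πhat h s)
            + ∑ s', (Phat h s (πhat h s) s' - Pstar h s (πhat h s) s') * Vhat (h + 1) s') := by
  -- nonnegativity of occupancy
  have hsoc : ∀ h s, 0 ≤ soc d0 Pstar πhat h s := by
    intro h
    induction h with
    | zero => exact hd0.1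
    | succ h ih =>
      intro s'
      exact Finset.sum_nonneg fun s _ => mul_nonneg (ih s) ((hPstar h s (πhat h s)).1 s')
  -- main claim by downward induction
  have main : ∀ k h, h + k = H →
      ∑ s, soc d0 Pstar πhat h s * (Vhat h s - Vpi h s)
        ≤ ∑ j ∈ Finset.Ico h H, ∑ s, soc d0 Pstar πhat j s *
            (β * b j s (πhat j s)
              + ∑ s', (Phat j s (πhat j s) s' - Pstar j s (πhat j s) s') * Vhat (j + 1) s') := by
    intro k
    induction k with
    | zero =>
      intro h hh
      simp only [Nat.add_zero] at hh
      subst hh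
      simp [hVhatH, hVpiH]
    | succ k ih =>
      intro h hh
      have hhH : h < H := by omega
      have hnext := ih (h+1) (by omega)
      -- pointwise bound
      have hpt : ∀ s, Vhat h s - Vpi h s ≤
          (β * b h s (πhat h s)
            + ∑ s', (Phat h s (πhat h s) s' - Pstar h s (πhat h s) s') * Vhat (h + 1) s')
          + ∑ s', Pstar h s (πhat h s) s' * (Vhat (h+1) s' - Vpi (h+1) s') := by
        intro s
        have h1 : Vhat h s ≤ Qhat h s (πhat h s) := by
          rw [hVhat h hhH s, hπhat h hhH s]
          exact min_le_left _ _
        have h2 : Qhat h s (πhat h s) - Vpi h s =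
            (β * b h s (πhat h s)
              + ∑ s', (Phat h s (πhat h s) s' - Pstar h s (πhat h s) s') * Vhat (h + 1) s')
            + ∑ s', Pstar h s (πhat h s) s' * (Vhat (h+1) s' - Vpi (h+1) s') := by
          rw [hQhat h hhH s (πhat h s), hVpi h hhH s]
          simp only [sub_mul, mul_sub, Finset.sum_sub_distrib]
          ring
        linarith
      calc ∑ s, soc d0 Pstar πhat h s * (Vhat h s - Vpi h s)
          ≤ ∑ s, soc d0 Pstar πhat h s *
            ((β * b h s (πhat h s)
              + ∑ s', (Phat h s (πhat h s) s' - Pstar h s (πhat h s) s') * Vhat (h + 1) s')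
            + ∑ s', Pstar h s (πhat h s) s' * (Vhat (h+1) s' - Vpi (h+1) s')) :=
            Finset.sum_le_sum fun s _ => mul_le_mul_of_nonneg_left (hpt s) (hsoc h s)
        _ = (∑ s, soc d0 Pstar πhat h s *
            (β * b h s (πhat h s)
              + ∑ s', (Phat h s (πhat h s) s' - Pstar h s (πhat h s) s') * Vhat (h + 1) s'))
            + ∑ s', soc d0 Pstar πhat (h+1) s' * (Vhat (h+1) s' - Vpi (h+1) s') := by
            have fub : ∑ s, soc d0 Pstar πhat h s *
                ∑ s', Pstar h s (πhat h s) s' * (Vhat (h+1) s' - Vpi (h+1) s')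
                = ∑ s', soc d0 Pstar πhat (h+1) s' * (Vhat (h+1) s' - Vpi (h+1) s') := by
              simp only [Finset.mul_sum, soc, Finset.sum_mul]
              rw [Finset.sum_comm]
              exact Finset.sum_congr rfl fun s' _ => Finset.sum_congr rfl fun s _ => by ring
            simp only [mul_add, Finset.sum_add_distrib, fub]
        _ ≤ (∑ s, soc d0 Pstar πhat h s *
            (β * b h s (πhat h s)
              + ∑ s', (Phat h s (πhat h s) s' - Pstar h s (πhat h s) s') * Vhat (h + 1) s'))
            + ∑ j ∈ Finset.Ico (h+1) H, ∑ s, soc d0 Pstar πhat j s *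
              (β * b j s (πhat j s)
                + ∑ s', (Phat j s (πhat j s) s' - Pstar j s (πhat j s) s') * Vhat (j + 1) s') :=
            add_le_add_right hnext _
        _ = ∑ j ∈ Finset.Ico h H, ∑ s, soc d0 Pstar πhat j s *
              (β * b j s (πhat j s)
                + ∑ s', (Phat j s (πhat j s) s' - Pstar j s (πhat j s) s') * Vhat (j + 1) s') :=
            (Finset.sum_eq_sum_Ico_succ_bot hhH (fun j => ∑ s, soc d0 Pstar πhat j s *
              (β * b j s (πhat j s)
                + ∑ s', (Phat j s (πhat j s) s' - Pstar j s (πhat j s) s') * Vhat (j + 1) s'))).symm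
  have := main H 0 (by omega)
  rw [Finset.range_eq_Ico]
  simpa only [show soc d0 Pstar πhat 0 = d0 from rfl] using this
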